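/- For all integers j < k, G(j,k) satisfies the 'reversed' recursion: G(j,k) = (2 s_j + cos α_j + cos α_{j+1}) G(j+1,k) − cos²(α_{j+1}) G(j+2,k). -/

import Mathlib

/-- Auxiliary recursion: `Gaux s α j n` corresponds to `G(j, j-1+n)`. -/
noncomputable def Gaux (s α : ℤ → ℝ) (j : ℤ) : ℕ → ℝ
  | 0 => 0
  | 1 => 1
  | (n+2) => (2 * s (j + n) + Real.cos (α (j + n)) + Real.cos (α (j + n + 1))) * Gaux s α j (n+1)
      - (Real.cos (α (j + n)))^2 * Gaux s α j n

/-- `G s α j k` is the recursively defined quantity `G(j,k)`, with `G(j,j-1)=0`, `G(j,j)=1`,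
`G(j,k) = (2 s_{k-1} + cos α_{k-1} + cos α_k) G(j,k-1) − cos²(α_{k-1}) G(j,k-2)` for `k ≥ j+1`. -/
noncomputable def G (s α : ℤ → ℝ) (j k : ℤ) : ℝ := Gaux s α j (k - (j-1)).toNat

/-- `Pprod α a b = ∏_{i=a}^{b-1} cos (α i)`. -/
noncomputable def Pprod (α : ℤ → ℝ) (a b : ℤ) : ℝ := ∏ i ∈ Finset.Ico a b, Real.cos (α i)

lemma Gaux_rec (s α : ℤ → ℝ) (j : ℤ) (n : ℕ) :
    Gaux s α j (n+2) = (2 * s (j + n) + Real.cos (α (j + n)) + Real.cos (α (j + n + 1)))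
      * Gaux s α j (n+1) - (Real.cos (α (j + n)))^2 * Gaux s α j n := by
  rw [Gaux]

lemma Gaux_key (s α : ℤ → ℝ) (j : ℤ) : ∀ n : ℕ,
    Gaux s α j (n+2) = (2 * s j + Real.cos (α j) + Real.cos (α (j+1))) * Gaux s α (j+1) (n+1)
      - (Real.cos (α (j+1)))^2 * Gaux s α (j+2) n := by
  intro n
  induction n using Nat.strong_induction_on with
  | _ n ih =>
    match n with
    | 0 => simp [Gaux]
    | 1 =>
      rw [Gaux_rec s α j 1, Gaux_rec s α (j+1) 0]
      simp [Gaux]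
      push_cast
      ring
    | (m+2) =>
      have h1 := ih (m+1) (by omega)
      have h2 := ih m (by omega)
      rw [Gaux_rec s α j (m+2), show (m+2+1:ℕ) = (m+1)+2 from rfl, h1, h2,
        Gaux_rec s α (j+1) (m+1), Gaux_rec s α (j+2) m]
      have e1 : (j+1) + ((m+1:ℕ):ℤ) = j + ((m+2:ℕ):ℤ) := by push_cast; ring
      have e2 : (j+2) + ((m:ℕ):ℤ) = j + ((m+2:ℕ):ℤ) := by push_cast; ring
      rw [e1, e2]
      ring

theorem stmt4 (s α : ℤ → ℝ) (hs : ∀ i, 0 < s i) (hα : ∀ i, 0 < Real.cos (α i))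
    (j k : ℤ) (hjk : j < k) :
    G s α j k = (2 * s j + Real.cos (α j) + Real.cos (α (j+1))) * G s α (j+1) k
      - (Real.cos (α (j+1)))^2 * G s α (j+2) k := by
  have h := Gaux_key s α j (k - j - 1).toNat
  unfold G
  rw [show (k - (j-1)).toNat = (k-j-1).toNat + 2 by omega,
    show (k - ((j+1)-1)).toNat = (k-j-1).toNat + 1 by omega,
    show (k - ((j+2)-1)).toNat = (k-j-1).toNat by omega]
  exact h
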